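/- With x(δ) = −1/σ(δ) and γ(δ) = E[Q(r̄ x(δ))], the derivative of γ with respect to δ satisfies γ′(δ) = −(δ x(δ)/(δ² − E[Q(r̄ x(δ))])) · E[r̄ e^{−(r̄ x(δ))²/2}]/√(2π), and moreover γ′(δ) < δ for every δ > 1/√2. -/

import Mathlib

open Real MeasureTheory ProbabilityTheory

noncomputable section

/-- The standard Gaussian tail function `Q(x) = ∫ₓ^∞ e^{−t²/2}/√(2π) dt`. -/
def gaussQ (x : ℝ) : ℝ := ∫ t in Set.Ioi x, Real.exp (-t ^ 2 / 2) / Real.sqrt (2 * π)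

/-- `f(x) = (1+x²)Q(x) − x e^{−x²/2}/√(2π)`. -/
def gaussF (x : ℝ) : ℝ :=
  (1 + x ^ 2) * gaussQ x - x * (Real.exp (-x ^ 2 / 2) / Real.sqrt (2 * π))

def gpdf (x : ℝ) : ℝ := Real.exp (-x ^ 2 / 2) / Real.sqrt (2 * π)
lemma stp_pos : 0 < Real.sqrt (2 * π) := Real.sqrt_pos.2 (by positivity)
lemma stp_ge_two : 2 ≤ Real.sqrt (2 * π) := by
  exact Real.le_sqrt_of_sq_le (by nlinarith [Real.pi_gt_three])
lemma gpdf_pos (x : ℝ) : 0 < gpdf x := div_pos (Real.exp_pos _) stp_pos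
lemma gpdf_le (x : ℝ) : gpdf x ≤ 1 / 2 := by
  unfold gpdf
  have h1 : Real.exp (-x ^ 2 / 2) ≤ 1 := Real.exp_le_one_iff.2 (by nlinarith [sq_nonneg x])
  rw [div_le_div_iff₀ stp_pos (by norm_num : (0:ℝ) < 2)]
  nlinarith [stp_ge_two, Real.exp_pos (-x^2/2)]
lemma continuous_gpdf : Continuous gpdf := by unfold gpdf; fun_prop
lemma integrable_gpdf : Integrable gpdf := by
  have h := integrable_exp_neg_mul_sq (by norm_num : (0:ℝ) < 1/2)
  have : gpdf = fun x => Real.exp (-(1/2) * x ^ 2) * (Real.sqrt (2*π))⁻¹ := by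
    funext x; unfold gpdf; rw [div_eq_mul_inv]; ring_nf
  rw [this]; exact h.mul_const _
lemma integral_gpdf : ∫ x, gpdf x = 1 := by
  unfold gpdf
  rw [integral_div]
  have : (fun x : ℝ => Real.exp (-x ^ 2 / 2)) = fun x => Real.exp (-(1/2) * x ^ 2) := by
    funext x; ring_nf
  rw [this, integral_gaussian]
  rw [div_eq_one_iff_eq (ne_of_gt stp_pos)]
  rw [show π / (1/2) = 2 * π by ring]
lemma hasDerivAt_gpdf (x : ℝ) : HasDerivAt gpdf (-x * gpdf x) x := by
  have h : HasDerivAt (fun y : ℝ => -y ^ 2 / 2) (-x) x := by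
    have := ((hasDerivAt_pow 2 x).neg).div_const 2
    simpa using this.congr_deriv (by ring)
  have := (h.exp).div_const (Real.sqrt (2 * π))
  unfold gpdf
  exact this.congr_deriv (by ring)
lemma gaussQ_eq (x : ℝ) :
    gaussQ x = (1 - ∫ t in Set.Iic (0:ℝ), gpdf t) - ∫ t in (0:ℝ)..x, gpdf t := by
  have h := intervalIntegral.integral_Iic_add_Ioi (f := gpdf) (b := x) (μ := volume)
    integrable_gpdf.integrableOn integrable_gpdf.integrableOn
  have h2 := intervalIntegral.integral_Iic_sub_Iic (f := gpdf) (a := (0:ℝ)) (b := x)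
    (μ := volume) integrable_gpdf.integrableOn integrable_gpdf.integrableOn
  have : gaussQ x = ∫ t in Set.Ioi x, gpdf t := rfl
  rw [this, ← integral_gpdf]
  linarith
lemma hasDerivAt_gaussQ (x : ℝ) : HasDerivAt gaussQ (-gpdf x) x := by
  have h : HasDerivAt (fun y => ∫ t in (0:ℝ)..y, gpdf t) (gpdf x) x :=
    intervalIntegral.integral_hasDerivAt_right integrable_gpdf.intervalIntegrable
      continuous_gpdf.aestronglyMeasurable.stronglyMeasurableAtFilter continuous_gpdf.continuousAt
  have := (hasDerivAt_const x ((1:ℝ) - ∫ t in Set.Iic (0:ℝ), gpdf t)).sub h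
  simp only [zero_sub] at this
  exact this.congr_of_eventuallyEq (Filter.Eventually.of_forall fun y => gaussQ_eq y)
lemma continuous_gaussQ : Continuous gaussQ := by
  have h : Differentiable ℝ gaussQ := fun x => (hasDerivAt_gaussQ x).differentiableAt
  exact h.continuous
lemma gaussQ_pos (x : ℝ) : 0 < gaussQ x := by
  have h : gaussQ x = ∫ t in Set.Ioi x, gpdf t := rfl
  rw [h]
  rw [setIntegral_pos_iff_support_of_nonneg_ae
    (Filter.Eventually.of_forall fun t => (gpdf_pos t).le) integrable_gpdf.integrableOn]
  have : Function.support gpdf = Set.univ := by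
    ext t; simp [Function.mem_support, ne_of_gt (gpdf_pos t)]
  rw [this, Set.univ_inter]
  simp [Real.volume_Ioi]
lemma gaussQ_le_one (x : ℝ) : gaussQ x ≤ 1 := by
  have h := intervalIntegral.integral_Iic_add_Ioi (f := gpdf) (b := x) (μ := volume)
    integrable_gpdf.integrableOn integrable_gpdf.integrableOn
  have h2 : (0:ℝ) ≤ ∫ t in Set.Iic x, gpdf t :=
    setIntegral_nonneg measurableSet_Iic fun t _ => (gpdf_pos t).le
  have : gaussQ x = ∫ t in Set.Ioi x, gpdf t := rfl
  rw [this, ← integral_gpdf]; linarith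
lemma gaussF_eq (x : ℝ) : gaussF x = (1 + x ^ 2) * gaussQ x - x * gpdf x := rfl
lemma hasDerivAt_gaussF (x : ℝ) :
    HasDerivAt gaussF (2 * (x * gaussQ x - gpdf x)) x := by
  have h1 : HasDerivAt (fun y : ℝ => (1 + y ^ 2)) (2 * x) x := by
    simpa using (hasDerivAt_pow 2 x).const_add 1
  have h2 := h1.mul (hasDerivAt_gaussQ x)
  have h3 := (hasDerivAt_id x).mul (hasDerivAt_gpdf x)
  have := h2.sub h3
  have heq : ((fun y : ℝ => (1 + y ^ 2)) * gaussQ - id * gpdf) = gaussF := by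
    funext y; rw [gaussF_eq]; rfl
  rw [heq] at this
  exact this.congr_deriv (by simp only [id_eq]; ring)
lemma gaussF_deriv_bound (x : ℝ) : |2 * (x * gaussQ x - gpdf x)| ≤ 2 * |x| + 1 := by
  have h1 : |x * gaussQ x| ≤ |x| := by
    rw [abs_mul]
    nlinarith [abs_nonneg x, abs_of_pos (gaussQ_pos x), gaussQ_le_one x, gaussQ_pos x]
  have h2 : |gpdf x| ≤ 1/2 := by rw [abs_of_pos (gpdf_pos x)]; exact gpdf_le x
  calc |2 * (x * gaussQ x - gpdf x)| = 2 * |x * gaussQ x - gpdf x| := by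
        rw [abs_mul]; norm_num
    _ ≤ 2 * (|x * gaussQ x| + |gpdf x|) := by
        have := abs_sub (x * gaussQ x) (gpdf x); nlinarith [abs_sub_abs_le_abs_sub (x*gaussQ x) (gpdf x), abs_sub_le (x*gaussQ x) 0 (gpdf x)]
    _ ≤ 2 * (|x| + 1/2) := by nlinarith
    _ = 2 * |x| + 1 := by ring
lemma gaussF_bound (x : ℝ) : |gaussF x| ≤ 2 + 2 * x ^ 2 := by
  rw [gaussF_eq]
  have h1 : |(1 + x ^ 2) * gaussQ x| ≤ 1 + x ^ 2 := by
    rw [abs_mul]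
    have : |1 + x^2| = 1 + x^2 := abs_of_pos (by positivity)
    rw [this, abs_of_pos (gaussQ_pos x)]
    nlinarith [gaussQ_le_one x, sq_nonneg x]
  have h2 : |x * gpdf x| ≤ |x| := by
    rw [abs_mul, abs_of_pos (gpdf_pos x)]
    nlinarith [gpdf_le x, abs_nonneg x, gpdf_pos x]
  have h3 : |x| ≤ 1 + x ^ 2 := by nlinarith [abs_nonneg x, sq_abs x, sq_nonneg (|x| - 1)]
  calc |(1 + x^2) * gaussQ x - x * gpdf x| ≤ |(1 + x^2) * gaussQ x| + |x * gpdf x| :=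
        abs_sub _ _
    _ ≤ 2 + 2 * x ^ 2 := by nlinarith

lemma continuous_gaussF : Continuous gaussF := by
  have h : Differentiable ℝ gaussF := fun x => (hasDerivAt_gaussF x).differentiableAt
  exact h.continuous

section Param

variable {Ω : Type} [MeasurableSpace Ω] (P : Measure Ω) [IsProbabilityMeasure P]
  (r : Ω → ℝ) (hrmeas : Measurable r) (hrpos : ∀ᵐ ω ∂P, 0 ≤ r ω)
  (hrmom : Integrable (fun ω => r ω ^ 2) P)

include hrmeas hrmom in
lemma integrable_r : Integrable r P := by
  refine (integrable_const (1:ℝ)).add hrmom |>.mono' hrmeas.aestronglyMeasurable ?_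
  filter_upwards with ω
  simp only [Real.norm_eq_abs, Pi.add_apply]
  nlinarith [abs_nonneg (r ω), sq_abs (r ω), sq_nonneg (|r ω| - 1)]

include hrmeas in
lemma int_Q (s : ℝ) : Integrable (fun ω => gaussQ (r ω * s)) P := by
  refine (integrable_const (1:ℝ)).mono'
    (continuous_gaussQ.measurable.comp (hrmeas.mul_const s)).aestronglyMeasurable ?_
  filter_upwards with ω
  rw [Real.norm_eq_abs, abs_of_pos (gaussQ_pos _)]
  exact gaussQ_le_one _

include hrmeas hrmom in
lemma int_rgpdf (s : ℝ) : Integrable (fun ω => r ω * gpdf (r ω * s)) P := by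
  refine (integrable_r P r hrmeas hrmom).abs.mono'
    (hrmeas.mul (continuous_gpdf.measurable.comp (hrmeas.mul_const s))).aestronglyMeasurable ?_
  filter_upwards with ω
  rw [Real.norm_eq_abs, abs_mul, abs_of_pos (gpdf_pos _)]
  nlinarith [gpdf_le (r ω * s), gpdf_pos (r ω * s), abs_nonneg (r ω)]

include hrmeas hrmom in
lemma int_r2Q (s : ℝ) : Integrable (fun ω => r ω ^ 2 * gaussQ (r ω * s)) P := by
  refine hrmom.mono'
    ((hrmeas.pow_const 2).mul (continuous_gaussQ.measurable.comp (hrmeas.mul_const s))).aestronglyMeasurable ?_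
  filter_upwards with ω
  rw [Real.norm_eq_abs, abs_mul, abs_of_nonneg (sq_nonneg (r ω)), abs_of_pos (gaussQ_pos _)]
  nlinarith [gaussQ_le_one (r ω * s), gaussQ_pos (r ω * s), sq_nonneg (r ω)]

include hrmeas hrmom in
lemma int_F (s : ℝ) : Integrable (fun ω => gaussF (r ω * s)) P := by
  refine ((integrable_const (2:ℝ)).add (hrmom.const_mul (2 * s ^ 2))).mono'
    (continuous_gaussF.measurable.comp (hrmeas.mul_const s)).aestronglyMeasurable ?_
  filter_upwards with ω
  simp only [Pi.add_apply, Real.norm_eq_abs]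
  calc |gaussF (r ω * s)| ≤ 2 + 2 * (r ω * s)^2 := gaussF_bound _
    _ = 2 + 2 * s ^ 2 * r ω ^ 2 := by ring

include hrmeas hrpos hrmom in
lemma hasDerivAt_Gamma (s₀ : ℝ) :
    HasDerivAt (fun s => ∫ ω, gaussQ (r ω * s) ∂P)
      (∫ ω, -gpdf (r ω * s₀) * r ω ∂P) s₀ := by
  have key := hasDerivAt_integral_of_dominated_loc_of_lip
    (F := fun s ω => gaussQ (r ω * s)) (F' := fun ω => -gpdf (r ω * s₀) * r ω)
    (x₀ := s₀) (bound := fun ω => r ω / 2) (μ := P) (Metric.ball_mem_nhds s₀ one_pos)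
    (Filter.Eventually.of_forall fun s =>
      (continuous_gaussQ.measurable.comp (hrmeas.mul_const s)).aestronglyMeasurable)
    (int_Q P r hrmeas s₀)
    (((continuous_gpdf.measurable.comp (hrmeas.mul_const s₀)).neg.mul hrmeas).aestronglyMeasurable)
    ?_ ((integrable_r P r hrmeas hrmom).div_const 2) ?_
  · exact key.2
  · filter_upwards [hrpos] with ω hω
    have hdiff : ∀ x ∈ Set.univ, HasDerivWithinAt (fun s => gaussQ (r ω * s))
        (-gpdf (r ω * x) * r ω) Set.univ x := by
      intro x _
      exact ((hasDerivAt_gaussQ (r ω * x)).comp x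
        ((hasDerivAt_id x).const_mul (r ω))).hasDerivWithinAt.congr_deriv (by simp [mul_comm])
    have hlip : LipschitzOnWith (Real.nnabs (r ω / 2)) (fun s => gaussQ (r ω * s)) Set.univ := by
      apply convex_univ.lipschitzOnWith_of_nnnorm_hasDerivWithin_le hdiff
      intro x _
      rw [← NNReal.coe_le_coe]
      simp only [coe_nnnorm, Real.norm_eq_abs, Real.coe_nnabs]
      rw [abs_mul, abs_neg, abs_of_pos (gpdf_pos _), abs_of_nonneg hω,
        abs_of_nonneg (by positivity : (0:ℝ) ≤ r ω / 2)]
      nlinarith [gpdf_le (r ω * x), gpdf_pos (r ω * x)]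
    exact hlip.mono (Set.subset_univ _)
  · filter_upwards with ω
    exact ((hasDerivAt_gaussQ (r ω * s₀)).comp s₀
      ((hasDerivAt_id s₀).const_mul (r ω))).congr_deriv (by simp [mul_comm])

include hrmeas hrpos hrmom in
lemma hasDerivAt_Phi (s₀ : ℝ) :
    HasDerivAt (fun s => ∫ ω, gaussF (r ω * s) ∂P)
      (∫ ω, 2 * (r ω * s₀ * gaussQ (r ω * s₀) - gpdf (r ω * s₀)) * r ω ∂P) s₀ := by
  set M : ℝ := |s₀| + 1 with hM
  have hMpos : 0 < M := by positivity
  have key := hasDerivAt_integral_of_dominated_loc_of_lip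
    (F := fun s ω => gaussF (r ω * s))
    (F' := fun ω => 2 * (r ω * s₀ * gaussQ (r ω * s₀) - gpdf (r ω * s₀)) * r ω)
    (x₀ := s₀) (bound := fun ω => 2 * M * r ω ^ 2 + r ω) (μ := P) (Metric.ball_mem_nhds s₀ one_pos)
    (Filter.Eventually.of_forall fun s =>
      (continuous_gaussF.measurable.comp (hrmeas.mul_const s)).aestronglyMeasurable)
    (int_F P r hrmeas hrmom s₀) ?_ ?_ ?_ ?_
  · exact key.2
  · apply Measurable.aestronglyMeasurable
    apply Measurable.mul _ hrmeas
    apply Measurable.const_mul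
    apply Measurable.sub
    · exact (hrmeas.mul_const s₀).mul (continuous_gaussQ.measurable.comp (hrmeas.mul_const s₀))
    · exact continuous_gpdf.measurable.comp (hrmeas.mul_const s₀)
  · filter_upwards [hrpos] with ω hω
    have hdiff : ∀ x ∈ Metric.ball s₀ 1, HasDerivWithinAt (fun s => gaussF (r ω * s))
        (2 * (r ω * x * gaussQ (r ω * x) - gpdf (r ω * x)) * r ω) (Metric.ball s₀ 1) x := by
      intro x _
      exact ((hasDerivAt_gaussF (r ω * x)).comp x
        ((hasDerivAt_id x).const_mul (r ω))).hasDerivWithinAt.congr_deriv (by ring)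
    apply (convex_ball s₀ 1).lipschitzOnWith_of_nnnorm_hasDerivWithin_le hdiff
    intro x hx
    rw [← NNReal.coe_le_coe]
    simp only [coe_nnnorm, Real.norm_eq_abs, Real.coe_nnabs]
    have hxM : |x| ≤ M := by
      rw [Metric.mem_ball, Real.dist_eq] at hx
      calc |x| = |s₀ + (x - s₀)| := by ring_nf
        _ ≤ |s₀| + |x - s₀| := abs_add_le _ _
        _ ≤ M := by rw [hM]; linarith [hx.le]
    have h1 : |2 * (r ω * x * gaussQ (r ω * x) - gpdf (r ω * x)) * r ω|
        ≤ (2 * |r ω * x| + 1) * r ω := by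
      rw [abs_mul, abs_of_nonneg hω]
      exact mul_le_mul_of_nonneg_right (gaussF_deriv_bound _) hω
    have h2 : (2 * |r ω * x| + 1) * r ω ≤ 2 * M * r ω ^ 2 + r ω := by
      rw [abs_mul, abs_of_nonneg hω]
      nlinarith [abs_nonneg x, hω]
    calc |2 * (r ω * x * gaussQ (r ω * x) - gpdf (r ω * x)) * r ω|
        ≤ 2 * M * r ω ^ 2 + r ω := h1.trans h2
      _ ≤ |2 * M * r ω ^ 2 + r ω| := le_abs_self _
  · exact ((hrmom.const_mul (2 * M)).add (integrable_r P r hrmeas hrmom))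
  · filter_upwards with ω
    exact ((hasDerivAt_gaussF (r ω * s₀)).comp s₀
      ((hasDerivAt_id s₀).const_mul (r ω))).congr_deriv (by ring)

lemma r_ne_ae_zero (hrlaw : Measure.map r P ≠ Measure.dirac 0) : ¬ (r =ᵐ[P] 0) := by
  intro h
  apply hrlaw
  calc Measure.map r P = Measure.map (fun _ => (0:ℝ)) P := Measure.map_congr h
    _ = Measure.dirac 0 := by
        rw [Measure.map_const]
        simp

include hrmeas in
lemma integral_pos_of_ae (g : Ω → ℝ)
    (hgint : Integrable g P) (hgnn : ∀ᵐ ω ∂P, 0 ≤ g ω)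
    (hgz : ∀ᵐ ω ∂P, g ω = 0 → r ω = 0)
    (hrlaw : Measure.map r P ≠ Measure.dirac 0) : 0 < ∫ ω, g ω ∂P := by
  rcases lt_or_eq_of_le (integral_nonneg_of_ae hgnn) with h | h
  · exact h
  exfalso
  apply r_ne_ae_zero P r hrlaw
  have hg0 : g =ᵐ[P] 0 := (integral_eq_zero_iff_of_nonneg_ae hgnn hgint).1 h.symm
  filter_upwards [hg0, hgz] with ω h1 h2
  exact h2 h1

end Param

/-- **Derivative of `γ`.** With `x(δ) = −1/σ(δ)`, where `σ(δ) > 0` solves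
`δ² = E[f(r̄ x(δ))]`, and `γ(δ) = E[Q(r̄ x(δ))]`, one has
`γ′(δ) = −(δ x(δ)/(δ² − E[Q(r̄ x(δ))])) · E[r̄ e^{−(r̄ x(δ))²/2}]/√(2π)`,
and moreover `γ′(δ) < δ` for every `δ > 1/√2`. -/
theorem gamma_deriv_formula_and_bound
    {Ω : Type} [MeasurableSpace Ω] (P : Measure Ω) [IsProbabilityMeasure P]
    (r : Ω → ℝ) (hrmeas : Measurable r)
    (hrpos : ∀ᵐ ω ∂P, 0 ≤ r ω)
    (hrmom : Integrable (fun ω => r ω ^ 2) P)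
    (hrlaw : Measure.map r P ≠ Measure.dirac 0)
    (σfun : ℝ → ℝ)
    (hσpos : ∀ δ ∈ Set.Ioi (1 / Real.sqrt 2), 0 < σfun δ)
    (hσdiff : ∀ δ ∈ Set.Ioi (1 / Real.sqrt 2), DifferentiableAt ℝ σfun δ)
    (hσeq : ∀ δ ∈ Set.Ioi (1 / Real.sqrt 2),
      δ ^ 2 = ∫ ω, gaussF (r ω * (-1 / σfun δ)) ∂P) :
    ∀ δ ∈ Set.Ioi (1 / Real.sqrt 2),
      HasDerivAt (fun t => ∫ ω, gaussQ (r ω * (-1 / σfun t)) ∂P)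
        (-(δ * (-1 / σfun δ) / (δ ^ 2 - ∫ ω, gaussQ (r ω * (-1 / σfun δ)) ∂P))
          * ((∫ ω, r ω * Real.exp (-(r ω * (-1 / σfun δ)) ^ 2 / 2) ∂P)
              / Real.sqrt (2 * π))) δ
      ∧ -(δ * (-1 / σfun δ) / (δ ^ 2 - ∫ ω, gaussQ (r ω * (-1 / σfun δ)) ∂P))
          * ((∫ ω, r ω * Real.exp (-(r ω * (-1 / σfun δ)) ^ 2 / 2) ∂P)
              / Real.sqrt (2 * π)) < δ := by
  intro δ hδ
  have hδmem : (1 : ℝ) / Real.sqrt 2 < δ := hδ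
  have hδpos : 0 < δ := lt_trans (by positivity) hδmem
  have hσδ : 0 < σfun δ := hσpos δ hδ
  set s₀ : ℝ := -1 / σfun δ with hs₀def
  have hs₀neg : s₀ < 0 := div_neg_of_neg_of_pos (by norm_num) hσδ
  have hs₀ne : s₀ ≠ 0 := ne_of_lt hs₀neg
  -- the inner map x(t) = -1/σ(t)
  have hxmdiff : DifferentiableAt ℝ (fun t => -1 / σfun t) δ := by
    have h := ((hσdiff δ hδ).inv (ne_of_gt hσδ)).neg
    exact h.congr_of_eventuallyEq (Filter.Eventually.of_forall fun t => by
      show -1 / σfun t = -(σfun t)⁻¹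
      rw [neg_div, one_div])
  set xd : ℝ := deriv (fun t => -1 / σfun t) δ with hxddef
  have hxm : HasDerivAt (fun t => -1 / σfun t) xd δ := hxmdiff.hasDerivAt
  -- main abbreviations
  set A : ℝ := ∫ ω, r ω * gpdf (r ω * s₀) ∂P with hAdef
  set B : ℝ := ∫ ω, r ω ^ 2 * gaussQ (r ω * s₀) ∂P with hBdef
  set γv : ℝ := ∫ ω, gaussQ (r ω * s₀) ∂P with hγdef
  -- derivative of Γ at s₀
  have hΓ : HasDerivAt (fun s => ∫ ω, gaussQ (r ω * s) ∂P) (-A) s₀ := by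
    have h := hasDerivAt_Gamma P r hrmeas hrpos hrmom s₀
    have heq : ∫ ω, -gpdf (r ω * s₀) * r ω ∂P = -A := by
      rw [hAdef, ← integral_neg]
      congr 1; funext ω; ring
    rwa [heq] at h
  -- derivative of Φ at s₀
  have hΦ : HasDerivAt (fun s => ∫ ω, gaussF (r ω * s) ∂P) (2 * (s₀ * B - A)) s₀ := by
    have h := hasDerivAt_Phi P r hrmeas hrpos hrmom s₀
    have heq : ∫ ω, 2 * (r ω * s₀ * gaussQ (r ω * s₀) - gpdf (r ω * s₀)) * r ω ∂P
        = 2 * (s₀ * B - A) := by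
      have h2 : (fun ω => 2 * (r ω * s₀ * gaussQ (r ω * s₀) - gpdf (r ω * s₀)) * r ω)
          = fun ω => (2 * s₀) * (r ω ^ 2 * gaussQ (r ω * s₀)) - 2 * (r ω * gpdf (r ω * s₀)) := by
        funext ω; ring
      rw [h2, integral_sub (f := fun ω => (2 * s₀) * (r ω ^ 2 * gaussQ (r ω * s₀)))
        (g := fun ω => 2 * (r ω * gpdf (r ω * s₀)))
        ((int_r2Q P r hrmeas hrmom s₀).const_mul _)
        ((int_rgpdf P r hrmeas hrmom s₀).const_mul _), integral_const_mul, integral_const_mul,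
        hAdef, hBdef]
      ring
    rwa [heq] at h
  -- chain rule for Φ ∘ xm and identification with t ↦ t²
  have hΦc : HasDerivAt (fun t => ∫ ω, gaussF (r ω * (-1 / σfun t)) ∂P)
      (2 * (s₀ * B - A) * xd) δ := by have h := hΦ.comp δ hxm; exact h
  have hcomp : HasDerivAt (fun t => ∫ ω, gaussQ (r ω * (-1 / σfun t)) ∂P) (-A * xd) δ := by
    have h := hΓ.comp δ hxm; exact h
  clear_value s₀ xd A B γv
  have hev : (fun t => t ^ 2) =ᶠ[nhds δ] (fun t => ∫ ω, gaussF (r ω * (-1 / σfun t)) ∂P) := by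
    filter_upwards [isOpen_Ioi.mem_nhds hδ] with t ht
    exact hσeq t ht
  have hsq : HasDerivAt (fun t : ℝ => t ^ 2) (2 * (s₀ * B - A) * xd) δ :=
    hΦc.congr_of_eventuallyEq hev
  have h2δ : 2 * (s₀ * B - A) * xd = 2 * δ := hsq.unique (by simpa using hasDerivAt_pow 2 δ)
  -- positivity of A and B
  have hApos : 0 < A := by
    rw [hAdef]
    apply integral_pos_of_ae P r hrmeas _ (int_rgpdf P r hrmeas hrmom s₀)
    · filter_upwards [hrpos] with ω hω
      exact mul_nonneg hω (gpdf_pos _).le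
    · filter_upwards with ω h
      rcases mul_eq_zero.1 h with h | h
      · exact h
      · exact absurd h (ne_of_gt (gpdf_pos _))
    · exact hrlaw
  have hBpos : 0 < B := by
    rw [hBdef]
    apply integral_pos_of_ae P r hrmeas _ (int_r2Q P r hrmeas hrmom s₀)
    · filter_upwards with ω
      exact mul_nonneg (sq_nonneg _) (gaussQ_pos _).le
    · filter_upwards with ω h
      rcases mul_eq_zero.1 h with h | h
      · exact pow_eq_zero_iff (by norm_num) |>.1 h
      · exact absurd h (ne_of_gt (gaussQ_pos _))
    · exact hrlaw
  have hC : s₀ * B - A < 0 := by nlinarith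
  have hCne : s₀ * B - A ≠ 0 := ne_of_lt hC
  have hxd : xd = δ / (s₀ * B - A) := by
    field_simp
    linarith [h2δ]
  -- the constraint identity δ² = γ + s₀²B − s₀A
  have hδ2 : δ ^ 2 = γv + s₀ ^ 2 * B - s₀ * A := by
    have h0 := hσeq δ hδ
    have heq : (fun ω => gaussF (r ω * s₀))
        = fun ω => gaussQ (r ω * s₀) + (s₀ ^ 2 * (r ω ^ 2 * gaussQ (r ω * s₀))
            - s₀ * (r ω * gpdf (r ω * s₀))) := by
      funext ω; rw [gaussF_eq]; ring
    rw [← hs₀def] at h0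
    rw [h0, heq, integral_add (f := fun ω => gaussQ (r ω * s₀))
      (g := fun ω => s₀ ^ 2 * (r ω ^ 2 * gaussQ (r ω * s₀)) - s₀ * (r ω * gpdf (r ω * s₀)))
      (int_Q P r hrmeas _)
      (((int_r2Q P r hrmeas hrmom _).const_mul _).sub ((int_rgpdf P r hrmeas hrmom _).const_mul _)),
      integral_sub (f := fun ω => s₀ ^ 2 * (r ω ^ 2 * gaussQ (r ω * s₀)))
        (g := fun ω => s₀ * (r ω * gpdf (r ω * s₀)))
        ((int_r2Q P r hrmeas hrmom _).const_mul _)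
        ((int_rgpdf P r hrmeas hrmom _).const_mul _),
      integral_const_mul, integral_const_mul]
    rw [hAdef, hBdef, hγdef]
    ring
  have hδγ : δ ^ 2 - γv = s₀ * (s₀ * B - A) := by rw [hδ2]; ring
  -- rewrite the exp-integral as A
  have hAexp : (∫ ω, r ω * Real.exp (-(r ω * s₀) ^ 2 / 2) ∂P) / Real.sqrt (2 * π) = A := by
    rw [hAdef, ← integral_div]
    congr 1; funext ω
    unfold gpdf
    rw [mul_div_assoc]
  -- the claimed derivative value equals -A * xd
  have hval : -(δ * s₀ / (δ ^ 2 - γv))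
      * ((∫ ω, r ω * Real.exp (-(r ω * s₀) ^ 2 / 2) ∂P) / Real.sqrt (2 * π)) = -A * xd := by
    rw [hAexp, hδγ, hxd]
    field_simp
  constructor
  · rw [hval]
    exact hcomp
  · rw [hval, hxd]
    have hpos : (0:ℝ) < A - s₀ * B := by nlinarith
    rw [show -A * (δ / (s₀ * B - A)) = δ * A / (A - s₀ * B) by
      rw [eq_div_iff (ne_of_gt hpos)]
      field_simp
      ring]
    rw [div_lt_iff₀ hpos]
    nlinarith [mul_pos (mul_pos hδpos hBpos) (neg_pos.2 hs₀neg)]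

end
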